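/- If f ∈ H^{1/2}(ℝ⁺) satisfies ∫₀^∞ |f(x)|²/x dx < ∞ and g ∈ H^{1/2}(ℝ⁺) also satisfies ∫₀^∞ |g(x)|²/x dx < ∞, then the function h defined by h(x) = f(x) for x > 0 and h(x) = g(−x) for x < 0 belongs to H^{1/2}(ℝ). -/

import Mathlib

open scoped ENNReal
open MeasureTheory Set

noncomputable section

/-- The Gagliardo `H^{1/2}` seminorm (squared) on the half line. -/
def gagHalf (f : ℝ → ℝ) : ℝ≥0∞ :=
  ∫⁻ x in Ioi (0:ℝ), ∫⁻ y in Ioi (0:ℝ), ENNReal.ofReal ((f x - f y) ^ 2 / (x - y) ^ 2)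

/-- `f ∈ H^{1/2}(ℝ⁺)` (Gagliardo definition). -/
def MemH12Half (f : ℝ → ℝ) : Prop :=
  MemLp f 2 (volume.restrict (Ioi 0)) ∧ gagHalf f < ⊤

/-- The function glued from `f` on `ℝ⁺` and `g(−·)` on `ℝ⁻`. -/
def glue (f g : ℝ → ℝ) : ℝ → ℝ := fun x => if 0 < x then f x else g (-x)

/-- `h ∈ H^{1/2}(ℝ)` (Gagliardo definition on the whole line). -/
def MemH12Line (h : ℝ → ℝ) : Prop :=
  MemLp h 2 volume ∧
    (∫⁻ x : ℝ, ∫⁻ y : ℝ, ENNReal.ofReal ((h x - h y) ^ 2 / (x - y) ^ 2)) < ⊤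

/-! ### Auxiliary lemmas -/

lemma lint_reflect (F : ℝ → ℝ≥0∞) :
    ∫⁻ x in Iio (0:ℝ), F (-x) = ∫⁻ x in Ioi (0:ℝ), F x := by
  have h := (Measure.measurePreserving_neg (volume : Measure ℝ)).setLIntegral_comp_preimage_emb
    (MeasurableEquiv.neg ℝ).measurableEmbedding F (Ioi 0)
  rw [← h]
  congr 1
  ext x; simp

lemma lint_Iic_reflect (F : ℝ → ℝ≥0∞) :
    ∫⁻ x in Iic (0:ℝ), F (-x) = ∫⁻ x in Ioi (0:ℝ), F x := by
  rw [← Measure.restrict_congr_set (Iio_ae_eq_Iic (a := (0:ℝ))), lint_reflect]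

lemma lint_shift (x : ℝ) (F : ℝ → ℝ≥0∞) :
    ∫⁻ y in Ioi (0:ℝ), F (x + y) = ∫⁻ u in Ioi x, F u := by
  have h := (measurePreserving_add_left (volume : Measure ℝ) x).setLIntegral_comp_preimage_emb
    (MeasurableEquiv.addLeft x).measurableEmbedding F (Ioi x)
  rw [← h]
  congr 1
  ext y; simp

lemma lint_inner {x : ℝ} (hx : 0 < x) :
    ∫⁻ y in Ioi (0:ℝ), ENNReal.ofReal (((x + y) ^ 2)⁻¹) = ENNReal.ofReal x⁻¹ := by
  rw [lint_shift x (fun u => ENNReal.ofReal ((u ^ 2)⁻¹))]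
  have h1 : ∫⁻ u in Ioi x, ENNReal.ofReal ((u ^ 2)⁻¹)
      = ∫⁻ u in Ioi x, ENNReal.ofReal (u ^ (-2 : ℝ)) := by
    refine setLIntegral_congr_fun measurableSet_Ioi (fun u hu => ?_)
    have hu0 : (0:ℝ) < u := hx.trans hu
    rw [Real.rpow_neg hu0.le, Real.rpow_two]
  rw [h1, ← ofReal_integral_eq_lintegral_ofReal
      (integrableOn_Ioi_rpow_of_lt (by norm_num) hx)
      (((ae_restrict_mem measurableSet_Ioi).mono fun u hu =>
        Real.rpow_nonneg (hx.trans hu).le _))]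
  rw [integral_Ioi_rpow_of_lt (by norm_num) hx]
  norm_num [Real.rpow_neg_one]

lemma lint_eval {x c : ℝ} (hx : 0 < x) (hc : 0 ≤ c) :
    ∫⁻ y in Ioi (0:ℝ), ENNReal.ofReal (c * ((x + y) ^ 2)⁻¹) = ENNReal.ofReal (c / x) := by
  have hm : Measurable fun y : ℝ => ENNReal.ofReal (((x + y) ^ 2)⁻¹) :=
    (((measurable_const.add measurable_id).pow_const 2).inv).ennreal_ofReal
  calc ∫⁻ y in Ioi (0:ℝ), ENNReal.ofReal (c * ((x + y) ^ 2)⁻¹)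
      = ∫⁻ y in Ioi (0:ℝ), ENNReal.ofReal c * ENNReal.ofReal (((x + y) ^ 2)⁻¹) := by
        simp_rw [← ENNReal.ofReal_mul hc]
    _ = ENNReal.ofReal c * ∫⁻ y in Ioi (0:ℝ), ENNReal.ofReal (((x + y) ^ 2)⁻¹) :=
        lintegral_const_mul _ hm
    _ = ENNReal.ofReal (c / x) := by
        rw [lint_inner hx, ← ENNReal.ofReal_mul hc, div_eq_mul_inv]

lemma side_eval (w : ℝ → ℝ)
    (hW : ∫⁻ x in Ioi (0:ℝ), ENNReal.ofReal (w x ^ 2 / x) < ⊤) :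
    ∫⁻ x in Ioi (0:ℝ), ∫⁻ y in Ioi (0:ℝ),
      ENNReal.ofReal (2 * w x ^ 2 * (((x:ℝ) + y) ^ 2)⁻¹) < ⊤ := by
  have e1 : ∫⁻ x in Ioi (0:ℝ), ∫⁻ y in Ioi (0:ℝ),
      ENNReal.ofReal (2 * w x ^ 2 * (((x:ℝ) + y) ^ 2)⁻¹)
      = ∫⁻ x in Ioi (0:ℝ), 2 * ENNReal.ofReal (w x ^ 2 / x) := by
    refine setLIntegral_congr_fun measurableSet_Ioi (fun x hx => ?_)
    rw [lint_eval hx (by positivity), mul_div_assoc,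
      ENNReal.ofReal_mul (by norm_num), ENNReal.ofReal_ofNat]
  rw [e1, lintegral_const_mul' _ _ (by norm_num)]
  exact ENNReal.mul_lt_top (by norm_num) hW

lemma cross (u v : ℝ → ℝ) (hu : Measurable u) (hv : Measurable v)
    (hWu : ∫⁻ x in Ioi (0:ℝ), ENNReal.ofReal (u x ^ 2 / x) < ⊤)
    (hWv : ∫⁻ x in Ioi (0:ℝ), ENNReal.ofReal (v x ^ 2 / x) < ⊤) :
    ∫⁻ x in Ioi (0:ℝ), ∫⁻ y in Ioi (0:ℝ),
      ENNReal.ofReal ((u x - v y) ^ 2 / (x + y) ^ 2) < ⊤ := by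
  have hm1 : Measurable (fun p : ℝ × ℝ =>
      ENNReal.ofReal (2 * u p.1 ^ 2 * ((p.1 + p.2) ^ 2)⁻¹)) :=
    ((measurable_const.mul ((hu.comp measurable_fst).pow_const 2)).mul
      (((measurable_fst.add measurable_snd).pow_const 2).inv)).ennreal_ofReal
  have hm2 : Measurable (fun p : ℝ × ℝ =>
      ENNReal.ofReal (2 * v p.2 ^ 2 * ((p.1 + p.2) ^ 2)⁻¹)) :=
    ((measurable_const.mul ((hv.comp measurable_snd).pow_const 2)).mul
      (((measurable_fst.add measurable_snd).pow_const 2).inv)).ennreal_ofReal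
  have hT1 : ∫⁻ x in Ioi (0:ℝ), ∫⁻ y in Ioi (0:ℝ),
      ENNReal.ofReal (2 * u x ^ 2 * (((x:ℝ) + y) ^ 2)⁻¹) < ⊤ := side_eval u hWu
  have hT2 : ∫⁻ x in Ioi (0:ℝ), ∫⁻ y in Ioi (0:ℝ),
      ENNReal.ofReal (2 * v y ^ 2 * (((x:ℝ) + y) ^ 2)⁻¹) < ⊤ := by
    rw [lintegral_lintegral_swap hm2.aemeasurable]
    have e2 : ∫⁻ y in Ioi (0:ℝ), ∫⁻ x in Ioi (0:ℝ),
        ENNReal.ofReal (2 * v y ^ 2 * (((x:ℝ) + y) ^ 2)⁻¹)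
        = ∫⁻ y in Ioi (0:ℝ), ∫⁻ x in Ioi (0:ℝ),
        ENNReal.ofReal (2 * v y ^ 2 * (((y:ℝ) + x) ^ 2)⁻¹) :=
      lintegral_congr fun y => lintegral_congr fun x => by rw [add_comm]
    rw [e2]
    exact side_eval v hWv
  calc ∫⁻ x in Ioi (0:ℝ), ∫⁻ y in Ioi (0:ℝ), ENNReal.ofReal ((u x - v y) ^ 2 / (x + y) ^ 2)
      ≤ ∫⁻ x in Ioi (0:ℝ), ∫⁻ y in Ioi (0:ℝ),
        (ENNReal.ofReal (2 * u x ^ 2 * (((x:ℝ) + y) ^ 2)⁻¹) +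
         ENNReal.ofReal (2 * v y ^ 2 * (((x:ℝ) + y) ^ 2)⁻¹)) := by
        refine lintegral_mono fun x => lintegral_mono fun y => ?_
        rw [← ENNReal.ofReal_add (by positivity) (by positivity)]
        apply ENNReal.ofReal_le_ofReal
        rw [div_eq_mul_inv, ← add_mul]
        exact mul_le_mul_of_nonneg_right (by nlinarith [sq_nonneg (u x + v y)])
          (inv_nonneg.2 (sq_nonneg _))
    _ = (∫⁻ x in Ioi (0:ℝ), ∫⁻ y in Ioi (0:ℝ),
          ENNReal.ofReal (2 * u x ^ 2 * (((x:ℝ) + y) ^ 2)⁻¹)) +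
        (∫⁻ x in Ioi (0:ℝ), ∫⁻ y in Ioi (0:ℝ),
          ENNReal.ofReal (2 * v y ^ 2 * (((x:ℝ) + y) ^ 2)⁻¹)) := by
        rw [← lintegral_add_left (hm1.lintegral_prod_right')]
        refine lintegral_congr fun x => ?_
        exact lintegral_add_left ((measurable_const.mul
          (((measurable_const.add measurable_id).pow_const 2).inv)).ennreal_ofReal) _
    _ < ⊤ := ENNReal.add_lt_top.2 ⟨hT1, hT2⟩

lemma glue_measurable {f g : ℝ → ℝ} (hf : Measurable f) (hg : Measurable g) :
    Measurable (glue f g) :=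
  Measurable.ite (measurableSet_lt measurable_const measurable_id) hf (hg.comp measurable_neg)

lemma memLp_glue {f g : ℝ → ℝ} (hfm : Measurable f) (hgm : Measurable g)
    (hf2 : MemLp f 2 (volume.restrict (Ioi 0)))
    (hg2 : MemLp g 2 (volume.restrict (Ioi 0))) :
    MemLp (glue f g) 2 volume := by
  have hmeas : Measurable (glue f g) := glue_measurable hfm hgm
  rw [memLp_two_iff_integrable_sq hmeas.aestronglyMeasurable]
  rw [← integrableOn_univ, ← Iic_union_Ioi (a := (0:ℝ)), integrableOn_union]
  constructor
  · have hgint : IntegrableOn (fun x : ℝ => g x ^ 2) (Ioi 0) volume :=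
      (memLp_two_iff_integrable_sq hg2.aestronglyMeasurable).mp hg2
    have h1 : IntegrableOn (fun x : ℝ => g (-x) ^ 2) (Iio 0) volume := by
      have h2 := ((Measure.measurePreserving_neg
        (volume : Measure ℝ)).integrableOn_comp_preimage
        (MeasurableEquiv.neg ℝ).measurableEmbedding
        (f := fun x : ℝ => g x ^ 2) (s := Ioi 0)).2 hgint
      have h3 : (Neg.neg ⁻¹' (Ioi (0:ℝ))) = Iio 0 := by ext x; simp
      rw [h3] at h2
      exact h2
    have h4 : IntegrableOn (fun x : ℝ => g (-x) ^ 2) (Iic 0) volume := by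
      unfold IntegrableOn
      rw [← Measure.restrict_congr_set (Iio_ae_eq_Iic (a := (0:ℝ)))]
      exact h1
    exact h4.congr ((ae_restrict_mem measurableSet_Iic).mono fun x hx => by
      simp only [glue]
      rw [if_neg (not_lt.2 (mem_Iic.1 hx))])
  · have hfint : IntegrableOn (fun x : ℝ => f x ^ 2) (Ioi 0) volume :=
      (memLp_two_iff_integrable_sq hf2.aestronglyMeasurable).mp hf2
    exact hfint.congr ((ae_restrict_mem measurableSet_Ioi).mono fun x hx => by
      simp only [glue]
      rw [if_pos (mem_Ioi.1 hx)])

lemma main_meas (f g : ℝ → ℝ) (hfm : Measurable f) (hgm : Measurable g)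
    (hf2 : MemLp f 2 (volume.restrict (Ioi 0))) (hfg : gagHalf f < ⊤)
    (hfw : ∫⁻ x in Ioi (0:ℝ), ENNReal.ofReal ((f x) ^ 2 / x) < ⊤)
    (hg2 : MemLp g 2 (volume.restrict (Ioi 0))) (hgg : gagHalf g < ⊤)
    (hgw : ∫⁻ x in Ioi (0:ℝ), ENNReal.ofReal ((g x) ^ 2 / x) < ⊤) :
    MemH12Line (glue f g) := by
  set h : ℝ → ℝ := glue f g with hh
  have hp : ∀ x : ℝ, 0 < x → h x = f x := fun x hx => if_pos hx
  have hn : ∀ x : ℝ, x ≤ 0 → h x = g (-x) := fun x hx => if_neg (not_lt.2 hx)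
  have hmeas : Measurable h := glue_measurable hfm hgm
  set K : ℝ → ℝ → ℝ≥0∞ := fun x y => ENNReal.ofReal ((h x - h y) ^ 2 / (x - y) ^ 2) with hK
  have hKm : Measurable (fun p : ℝ × ℝ => K p.1 p.2) :=
    ((((hmeas.comp measurable_fst).sub (hmeas.comp measurable_snd)).pow_const 2).div
      ((measurable_fst.sub measurable_snd).pow_const 2)).ennreal_ofReal
  refine ⟨memLp_glue hfm hgm hf2 hg2, ?_⟩
  -- quadrant values
  have hA : ∫⁻ x in Ioi (0:ℝ), ∫⁻ y in Ioi (0:ℝ), K x y = gagHalf f := by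
    unfold gagHalf
    refine setLIntegral_congr_fun measurableSet_Ioi (fun x hx => ?_)
    refine setLIntegral_congr_fun measurableSet_Ioi (fun y hy => ?_)
    rw [hK]; simp only []
    rw [hp x hx, hp y hy]
  have hB : ∫⁻ x in Ioi (0:ℝ), ∫⁻ y in Iic (0:ℝ), K x y
      = ∫⁻ x in Ioi (0:ℝ), ∫⁻ y in Ioi (0:ℝ),
          ENNReal.ofReal ((f x - g y) ^ 2 / (x + y) ^ 2) := by
    refine setLIntegral_congr_fun measurableSet_Ioi (fun x hx => ?_)
    have e : ∫⁻ y in Iic (0:ℝ), K x y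
        = ∫⁻ y in Iic (0:ℝ),
            (fun t => ENNReal.ofReal ((f x - g t) ^ 2 / (x + t) ^ 2)) (-y) := by
      refine setLIntegral_congr_fun measurableSet_Iic (fun y hy => ?_)
      rw [hK]; simp only []
      rw [hp x hx, hn y hy, show (x + -y) ^ 2 = (x - y) ^ 2 by ring]
    rw [e]
    exact lint_Iic_reflect (fun t => ENNReal.ofReal ((f x - g t) ^ 2 / (x + t) ^ 2))
  have hC : ∫⁻ x in Iic (0:ℝ), ∫⁻ y in Ioi (0:ℝ), K x y
      = ∫⁻ x in Ioi (0:ℝ), ∫⁻ y in Ioi (0:ℝ),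
          ENNReal.ofReal ((g x - f y) ^ 2 / (x + y) ^ 2) := by
    have e : ∫⁻ x in Iic (0:ℝ), ∫⁻ y in Ioi (0:ℝ), K x y
        = ∫⁻ x in Iic (0:ℝ),
            (fun s => ∫⁻ y in Ioi (0:ℝ),
              ENNReal.ofReal ((g s - f y) ^ 2 / (s + y) ^ 2)) (-x) := by
      refine setLIntegral_congr_fun measurableSet_Iic (fun x hx => ?_)
      refine setLIntegral_congr_fun measurableSet_Ioi (fun y hy => ?_)
      rw [hK]; simp only []
      rw [hn x hx, hp y hy, show (-x + y) ^ 2 = (x - y) ^ 2 by ring]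
    rw [e]
    exact lint_Iic_reflect
      (fun s => ∫⁻ y in Ioi (0:ℝ), ENNReal.ofReal ((g s - f y) ^ 2 / (s + y) ^ 2))
  have hE : ∫⁻ x in Iic (0:ℝ), ∫⁻ y in Iic (0:ℝ), K x y = gagHalf g := by
    have e : ∫⁻ x in Iic (0:ℝ), ∫⁻ y in Iic (0:ℝ), K x y
        = ∫⁻ x in Iic (0:ℝ),
            (fun s => ∫⁻ y in Ioi (0:ℝ),
              ENNReal.ofReal ((g s - g y) ^ 2 / (s - y) ^ 2)) (-x) := by
      refine setLIntegral_congr_fun measurableSet_Iic (fun x hx => ?_)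
      have e2 : ∫⁻ y in Iic (0:ℝ), K x y
          = ∫⁻ y in Iic (0:ℝ),
              (fun t => ENNReal.ofReal ((g (-x) - g t) ^ 2 / (-x - t) ^ 2)) (-y) := by
        refine setLIntegral_congr_fun measurableSet_Iic (fun y hy => ?_)
        rw [hK]; simp only []
        rw [hn x hx, hn y hy, show (-x - -y) ^ 2 = (x - y) ^ 2 by ring]
      rw [e2]
      exact lint_Iic_reflect
        (fun t => ENNReal.ofReal ((g (-x) - g t) ^ 2 / (-x - t) ^ 2))
    unfold gagHalf
    rw [e]
    exact lint_Iic_reflect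
      (fun s => ∫⁻ y in Ioi (0:ℝ), ENNReal.ofReal ((g s - g y) ^ 2 / (s - y) ^ 2))
  -- splitting
  have hsplit : (∫⁻ x : ℝ, ∫⁻ y : ℝ, K x y)
      = ((∫⁻ x in Ioi (0:ℝ), ∫⁻ y in Ioi (0:ℝ), K x y)
          + ∫⁻ x in Ioi (0:ℝ), ∫⁻ y in Iic (0:ℝ), K x y)
        + ((∫⁻ x in Iic (0:ℝ), ∫⁻ y in Ioi (0:ℝ), K x y)
          + ∫⁻ x in Iic (0:ℝ), ∫⁻ y in Iic (0:ℝ), K x y) := by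
    have hy : ∀ x : ℝ, (∫⁻ y : ℝ, K x y)
        = (∫⁻ y in Ioi (0:ℝ), K x y) + ∫⁻ y in Iic (0:ℝ), K x y := fun x => by
      rw [← lintegral_add_compl (fun y => K x y) measurableSet_Ioi, compl_Ioi]
    calc (∫⁻ x : ℝ, ∫⁻ y : ℝ, K x y)
        = (∫⁻ x in Ioi (0:ℝ), ∫⁻ y : ℝ, K x y) + ∫⁻ x in Iic (0:ℝ), ∫⁻ y : ℝ, K x y := by
          rw [← lintegral_add_compl (fun x => ∫⁻ y : ℝ, K x y) measurableSet_Ioi, compl_Ioi]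
      _ = ((∫⁻ x in Ioi (0:ℝ), ∫⁻ y in Ioi (0:ℝ), K x y)
            + ∫⁻ x in Ioi (0:ℝ), ∫⁻ y in Iic (0:ℝ), K x y)
          + ((∫⁻ x in Iic (0:ℝ), ∫⁻ y in Ioi (0:ℝ), K x y)
            + ∫⁻ x in Iic (0:ℝ), ∫⁻ y in Iic (0:ℝ), K x y) := by
          rw [lintegral_congr hy, lintegral_congr hy (μ := volume.restrict (Iic 0)),
            lintegral_add_left (hKm.lintegral_prod_right'),
            lintegral_add_left (hKm.lintegral_prod_right')]
  rw [hsplit, hA, hB, hC, hE]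
  have hBfin := cross f g hfm hgm hfw hgw
  have hCfin := cross g f hgm hfm hgw hfw
  exact ENNReal.add_lt_top.2 ⟨ENNReal.add_lt_top.2 ⟨hfg, hBfin⟩,
    ENNReal.add_lt_top.2 ⟨hCfin, hgg⟩⟩

lemma gag_congr {f f' : ℝ → ℝ} (h : f =ᵐ[volume.restrict (Ioi 0)] f') :
    gagHalf f = gagHalf f' := by
  refine lintegral_congr_ae ?_
  filter_upwards [h] with x hx
  refine lintegral_congr_ae ?_
  filter_upwards [h] with y hy
  rw [hx, hy]

lemma line_congr {h h' : ℝ → ℝ} (hh : h' =ᵐ[(volume : Measure ℝ)] h)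
    (H : MemH12Line h') : MemH12Line h := by
  refine ⟨H.1.ae_eq hh, ?_⟩
  have e : (∫⁻ x : ℝ, ∫⁻ y : ℝ, ENNReal.ofReal ((h x - h y) ^ 2 / (x - y) ^ 2))
      = ∫⁻ x : ℝ, ∫⁻ y : ℝ, ENNReal.ofReal ((h' x - h' y) ^ 2 / (x - y) ^ 2) := by
    refine lintegral_congr_ae ?_
    filter_upwards [hh] with x hx
    refine lintegral_congr_ae ?_
    filter_upwards [hh] with y hy
    rw [hx, hy]
  rw [e]
  exact H.2

/-- If `f, g ∈ H^{1/2}(ℝ⁺)` both satisfy the weighted Hardy-type integrability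
`∫₀^∞ |·|²/x dx < ∞`, then the glued function belongs to `H^{1/2}(ℝ)`. -/
theorem stmt5 (f g : ℝ → ℝ)
    (hf : MemH12Half f)
    (hfw : ∫⁻ x in Ioi (0:ℝ), ENNReal.ofReal ((f x) ^ 2 / x) < ⊤)
    (hg : MemH12Half g)
    (hgw : ∫⁻ x in Ioi (0:ℝ), ENNReal.ofReal ((g x) ^ 2 / x) < ⊤) :
    MemH12Line (glue f g) := by
  obtain ⟨hfLp, hfgag⟩ := hf
  obtain ⟨hgLp, hggag⟩ := hg
  set f' : ℝ → ℝ := hfLp.aestronglyMeasurable.mk f with hf'def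
  set g' : ℝ → ℝ := hgLp.aestronglyMeasurable.mk g with hg'def
  have hf'm : Measurable f' := hfLp.aestronglyMeasurable.stronglyMeasurable_mk.measurable
  have hg'm : Measurable g' := hgLp.aestronglyMeasurable.stronglyMeasurable_mk.measurable
  have hff' : f =ᵐ[volume.restrict (Ioi 0)] f' := hfLp.aestronglyMeasurable.ae_eq_mk
  have hgg' : g =ᵐ[volume.restrict (Ioi 0)] g' := hgLp.aestronglyMeasurable.ae_eq_mk
  have H : MemH12Line (glue f' g') := by
    refine main_meas f' g' hf'm hg'm (hfLp.ae_eq hff') ?_ ?_ (hgLp.ae_eq hgg') ?_ ?_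
    · rw [← gag_congr hff']; exact hfgag
    · have ef : (∫⁻ x in Ioi (0:ℝ), ENNReal.ofReal (f' x ^ 2 / x))
          = ∫⁻ x in Ioi (0:ℝ), ENNReal.ofReal (f x ^ 2 / x) :=
        lintegral_congr_ae (by filter_upwards [hff'] with x hx; rw [hx])
      rw [ef]; exact hfw
    · rw [← gag_congr hgg']; exact hggag
    · have eg : (∫⁻ x in Ioi (0:ℝ), ENNReal.ofReal (g' x ^ 2 / x))
          = ∫⁻ x in Ioi (0:ℝ), ENNReal.ofReal (g x ^ 2 / x) :=
        lintegral_congr_ae (by filter_upwards [hgg'] with x hx; rw [hx])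
      rw [eg]; exact hgw
  refine line_congr ?_ H
  -- glue f' g' =ᵐ[volume] glue f g
  have h1 : ∀ᵐ x ∂(volume : Measure ℝ), x ∈ Ioi (0:ℝ) → f x = f' x :=
    (ae_restrict_iff' measurableSet_Ioi).mp hff'
  have h2 : ∀ᵐ x ∂(volume : Measure ℝ), x ∈ Ioi (0:ℝ) → g x = g' x :=
    (ae_restrict_iff' measurableSet_Ioi).mp hgg'
  have h2' : ∀ᵐ x ∂(volume : Measure ℝ), -x ∈ Ioi (0:ℝ) → g (-x) = g' (-x) :=
    (Measure.measurePreserving_neg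
      (volume : Measure ℝ)).quasiMeasurePreserving.ae h2
  have h0 : ∀ᵐ x ∂(volume : Measure ℝ), x ≠ (0:ℝ) := by
    rw [ae_iff]
    simp only [ne_eq, not_not]
    simp
  filter_upwards [h1, h2', h0] with x hx1 hx2 hx0
  by_cases hx : 0 < x
  · simp only [glue, if_pos hx]
    exact (hx1 hx).symm
  · simp only [glue, if_neg hx]
    have hxlt : x < 0 := lt_of_le_of_ne (not_lt.1 hx) hx0
    exact (hx2 (by simpa using hxlt)).symm
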